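/- arXiv:2305.13865 — 2 statements merged into one kernel-verified Lean document; each statement's English description precedes it below -/
import Mathlib

section
/- The Gaussian mechanism M(D) = f(D) + N(0, σ²), where f has ℓ₂-sensitivity Δ (i.e., |f(D) − f(D')| ≤ Δ for neighboring datasets) and σ ≥ Δ · sqrt(2 log(1.25/δ)) / ε with ε ∈ (0,1), is (ε, δ)-differentially private. -/
open MeasureTheory ProbabilityTheory

section AuxGaussianDP
open Real NNReal


lemma gausspdf_eq (x : ℝ) : gaussianPDFReal 0 1 x = (Real.sqrt (2 * π))⁻¹ * Real.exp (-(2⁻¹) * x ^ 2) := by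
  simp only [gaussianPDFReal, NNReal.coe_one, mul_one, sub_zero]
  ring_nf

lemma gauss_std_Ioi_zero : gaussianReal 0 1 (Set.Ioi 0) = ENNReal.ofReal (1/2) := by
  rw [gaussianReal_apply_eq_integral 0 one_ne_zero]
  congr 1
  rw [MeasureTheory.setIntegral_congr_fun measurableSet_Ioi (fun x _ => gausspdf_eq x),
    MeasureTheory.integral_const_mul, integral_gaussian_Ioi]
  have h1 : π / 2⁻¹ = 2 * π := by ring
  have h2 : Real.sqrt (2 * π) ≠ 0 := by positivity
  rw [h1]
  field_simp

lemma gauss_shift_Ioi (s : ℝ) : gaussianReal s 1 (Set.Ioi s) = ENNReal.ofReal (1/2) := by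
  have h := gaussianReal_map_add_const (μ := 0) (v := 1) s
  rw [zero_add] at h
  rw [← h, Measure.map_apply (measurable_id'.add_const s) measurableSet_Ioi]
  have hset : (· + s) ⁻¹' Set.Ioi s = Set.Ioi 0 := by ext x; simp
  rw [hset, gauss_std_Ioi_zero]

lemma gauss_std_tail {s : ℝ} (hs : 0 ≤ s) :
    gaussianReal 0 1 (Set.Ioi s) ≤ ENNReal.ofReal (Real.exp (-s^2/2) * (1/2)) := by
  rw [gaussianReal_apply 0 one_ne_zero]
  have hpt : ∀ x ∈ Set.Ioi s,
      gaussianPDF 0 1 x ≤ ENNReal.ofReal (Real.exp (-s^2/2)) * gaussianPDF s 1 x := by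
    intro x hx
    simp only [gaussianPDF]
    rw [← ENNReal.ofReal_mul (Real.exp_nonneg _)]
    apply ENNReal.ofReal_le_ofReal
    simp only [gaussianPDFReal, NNReal.coe_one, mul_one, sub_zero]
    rw [mul_comm (Real.exp (-s^2/2)) _, mul_assoc]
    refine mul_le_mul_of_nonneg_left ?_ (by positivity)
    rw [← Real.exp_add]
    apply Real.exp_le_exp.2
    have hxs : s ≤ x := le_of_lt hx
    nlinarith [mul_nonneg hs (sub_nonneg.2 hxs)]
  calc ∫⁻ x in Set.Ioi s, gaussianPDF 0 1 x
      ≤ ∫⁻ x in Set.Ioi s, ENNReal.ofReal (Real.exp (-s^2/2)) * gaussianPDF s 1 x :=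
        setLIntegral_mono ((measurable_gaussianPDF s 1).const_mul _) hpt
    _ = ENNReal.ofReal (Real.exp (-s^2/2)) * gaussianReal s 1 (Set.Ioi s) := by
        rw [lintegral_const_mul _ (measurable_gaussianPDF s 1), gaussianReal_apply s one_ne_zero]
    _ = ENNReal.ofReal (Real.exp (-s^2/2) * (1/2)) := by
        rw [gauss_shift_Ioi, ← ENNReal.ofReal_mul (Real.exp_nonneg _)]

lemma gauss_std_Ioi_neg {s : ℝ} (hs : s ≤ 0) :
    gaussianReal 0 1 (Set.Ioi s) ≤ ENNReal.ofReal (1/2 + (-s) * (Real.sqrt (2*π))⁻¹) := by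
  rw [← Set.Ioc_union_Ioi_eq_Ioi hs]
  refine le_trans (measure_union_le _ _) ?_
  have h1 : gaussianReal 0 1 (Set.Ioc s 0) ≤ ENNReal.ofReal ((-s) * (Real.sqrt (2*π))⁻¹) := by
    rw [gaussianReal_apply 0 one_ne_zero]
    calc ∫⁻ x in Set.Ioc s 0, gaussianPDF 0 1 x
        ≤ ∫⁻ _ in Set.Ioc s 0, ENNReal.ofReal ((Real.sqrt (2*π))⁻¹) := by
          refine setLIntegral_mono measurable_const (fun x _ => ?_)
          rw [gaussianPDF, ENNReal.ofReal_le_ofReal_iff (by positivity), gausspdf_eq]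
          calc (Real.sqrt (2*π))⁻¹ * Real.exp (-(2⁻¹) * x^2)
              ≤ (Real.sqrt (2*π))⁻¹ * 1 := by
                refine mul_le_mul_of_nonneg_left ?_ (by positivity)
                rw [← Real.exp_zero]
                apply Real.exp_le_exp.2; nlinarith [sq_nonneg x]
            _ = (Real.sqrt (2*π))⁻¹ := mul_one _
      _ = ENNReal.ofReal ((Real.sqrt (2*π))⁻¹) * volume (Set.Ioc s 0) := setLIntegral_const _ _
      _ = ENNReal.ofReal ((-s) * (Real.sqrt (2*π))⁻¹) := by
          rw [Real.volume_Ioc, ← ENNReal.ofReal_mul (by positivity)]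
          congr 1; ring
  calc gaussianReal 0 1 (Set.Ioc s 0) + gaussianReal 0 1 (Set.Ioi 0)
      ≤ ENNReal.ofReal ((-s) * (Real.sqrt (2*π))⁻¹) + ENNReal.ofReal (1/2) := by
        exact add_le_add h1 (le_of_eq gauss_std_Ioi_zero)
    _ = ENNReal.ofReal (1/2 + (-s) * (Real.sqrt (2*π))⁻¹) := by
        rw [← ENNReal.ofReal_add (mul_nonneg (neg_nonneg.2 hs) (by positivity)) (by norm_num)]; congr 1; ring

lemma gauss_linear_tail (μ : ℝ) (v : ℝ≥0) (hv : v ≠ 0) {c : ℝ} (hc : c ≠ 0) (t : ℝ) :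
    gaussianReal μ v {x | t < c * (x - μ)}
      = gaussianReal 0 1 (Set.Ioi (t / (|c| * Real.sqrt v))) := by
  have hvpos : (0:ℝ) < (v:ℝ) := by positivity
  set r : ℝ := |c| * Real.sqrt v with hr
  have hrpos : 0 < r := by
    apply mul_pos (abs_pos.2 hc) (Real.sqrt_pos.2 hvpos)
  set k : ℝ := c / r with hk
  have hr2 : r^2 = c^2 * v := by
    rw [hr, mul_pow, sq_abs, Real.sq_sqrt hvpos.le]
  have hmap : Measure.map (fun x => k * (x - μ)) (gaussianReal μ v) = gaussianReal 0 1 := by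
    have h1 : (fun x : ℝ => k * (x - μ)) = (fun y => k * y) ∘ (fun x => x + (-μ)) := by
      ext x; simp [sub_eq_add_neg]
    rw [h1, ← Measure.map_map (measurable_const_mul k) (measurable_id'.add_const _),
      gaussianReal_map_add_const, gaussianReal_map_const_mul]
    have h0 : k * (μ + -μ) = 0 := by ring
    rw [h0]
    congr 1
    rw [← NNReal.coe_inj]
    push_cast
    rw [hk, div_pow, hr2]
    field_simp
  have hset : {x | t < c * (x - μ)} = (fun x => k * (x - μ)) ⁻¹' (Set.Ioi (t / r)) := by
    ext x
    simp only [Set.mem_setOf_eq, Set.mem_preimage, Set.mem_Ioi]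
    rw [hk, div_mul_eq_mul_div, div_lt_div_iff_of_pos_right hrpos]
  rw [hset, ← Measure.map_apply ((measurable_id'.sub_const μ).const_mul k) measurableSet_Ioi, hmap]

set_option maxHeartbeats 1000000 in
lemma tail_le_delta {δ : ℝ} (hδ : δ ∈ Set.Ioo (0:ℝ) 1) {s : ℝ}
    (hs : Real.sqrt (2 * Real.log (1.25/δ)) -
      (2 * Real.sqrt (2 * Real.log (1.25/δ)))⁻¹ ≤ s) :
    gaussianReal 0 1 (Set.Ioi s) ≤ ENNReal.ofReal δ := by
  obtain ⟨hδ0, hδ1⟩ := hδ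
  set L : ℝ := Real.log (1.25/δ) with hL
  have hquot : (1:ℝ) < 1.25/δ := by
    rw [lt_div_iff₀ hδ0]; linarith
  have hLlb : (1:ℝ)/5 ≤ L := by
    have h := Real.one_sub_inv_le_log_of_pos (x := 1.25/δ) (by linarith)
    have h2 : (1.25/δ)⁻¹ ≤ 1/1.25 := by
      rw [inv_le_comm₀ (by linarith) (by norm_num)]
      rw [le_div_iff₀ hδ0] at *
      nlinarith
    nlinarith
  set a : ℝ := Real.sqrt (2 * L) with ha
  have ha2 : a^2 = 2 * L := Real.sq_sqrt (by linarith)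
  have halb : (5:ℝ)/8 ≤ a := by
    nlinarith [Real.sqrt_nonneg (2*L), ha2]
  have hapos : (0:ℝ) < a := by linarith
  have hdel : δ = 1.25 * Real.exp (-L) := by
    rw [hL, Real.exp_neg, Real.exp_log (by linarith)]
    field_simp
  by_cases hcase : (1:ℝ)/4 ≤ L
  · -- s ≥ 0, use the exponential tail bound
    have hs0 : 0 ≤ a - (2*a)⁻¹ := by
      have hinv : a * a⁻¹ = 1 := mul_inv_cancel₀ hapos.ne'
      rw [mul_inv]
      nlinarith [hinv, hapos, ha2]
    have hs0' : (0:ℝ) ≤ s := le_trans hs0 hs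
    refine le_trans (gauss_std_tail hs0') (ENNReal.ofReal_le_ofReal ?_)
    have hsq : 2*L - 1 ≤ s^2 := by
      have h1 : (a - (2*a)⁻¹)^2 ≤ s^2 := by nlinarith
      have h2 : (a - (2*a)⁻¹)^2 = a^2 - 1 + (2*a)⁻¹^2 := by
        field_simp; ring
      nlinarith [sq_nonneg ((2*a)⁻¹)]
    have hexp : Real.exp (-s^2/2) ≤ Real.exp (1/2) * Real.exp (-L) := by
      rw [← Real.exp_add]
      apply Real.exp_le_exp.2
      linarith
    have he : Real.exp (1/2) ≤ 2.5 := by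
      nlinarith [Real.exp_one_lt_d9, Real.exp_pos (1/2 : ℝ),
        (by rw [← Real.exp_add]; norm_num : Real.exp (1/2) * Real.exp (1/2) = Real.exp 1)]
    nlinarith [Real.exp_pos (-L)]
  · -- L < 1/4, δ is large
    push_neg at hcase
    have hδlb : (15:ℝ)/16 ≤ δ := by
      have h1 : (3:ℝ)/4 ≤ Real.exp (-L) := by
        have := Real.add_one_le_exp (-L)
        linarith
      nlinarith [hdel]
    by_cases hs0 : (0:ℝ) ≤ s
    · refine le_trans (gauss_std_tail hs0) (ENNReal.ofReal_le_ofReal ?_)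
      have : Real.exp (-s^2/2) ≤ 1 := by
        rw [← Real.exp_zero]; apply Real.exp_le_exp.2; nlinarith [sq_nonneg s]
      linarith
    · push_neg at hs0
      refine le_trans (gauss_std_Ioi_neg hs0.le) (ENNReal.ofReal_le_ofReal ?_)
      have hns : -s ≤ 4/5 := by
        have h1 : (2*a)⁻¹ ≤ 4/5 := by
          rw [inv_le_comm₀ (by linarith) (by norm_num)]
          linarith
        have h2 : a - (2*a)⁻¹ ≤ s := hs
        have h3 : 0 ≤ a := hapos.le
        linarith
      have hpi : (Real.sqrt (2*π))⁻¹ ≤ 2/5 := by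
        rw [inv_le_comm₀ (by positivity) (by norm_num)]
        have h52 : ((2:ℝ)/5)⁻¹ = Real.sqrt ((5/2)^2) := by
          rw [Real.sqrt_sq (by norm_num)]; norm_num
        rw [h52]
        apply Real.sqrt_le_sqrt
        rw [show ((5:ℝ)/2)^2 = 25/4 by norm_num]
        linarith [Real.pi_gt_d6]
      have hprod : (-s) * (Real.sqrt (2*π))⁻¹ ≤ (4/5) * (2/5) :=
        mul_le_mul hns hpi (by positivity) (by norm_num)
      linarith

end AuxGaussianDP

def DP {D Ω : Type*} [MeasurableSpace Ω] (neighbor : D → D → Prop)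
    (A : D → Measure Ω) (ε δ : ℝ) : Prop :=
  ∀ d d', neighbor d d' → ∀ s : Set Ω, MeasurableSet s →
    A d s ≤ ENNReal.ofReal (Real.exp ε) * A d' s + ENNReal.ofReal δ

set_option maxHeartbeats 1000000

/-- The Gaussian mechanism `M(D) = f(D) + N(0, σ²)`, where `f` has
ℓ₂-sensitivity `Δ` and `σ ≥ Δ √(2 log(1.25/δ)) / ε` with `ε ∈ (0,1)`,
is `(ε, δ)`-differentially private. -/
theorem gaussian_mechanism_is_DP {D : Type*} (neighbor : D → D → Prop)
    (f : D → ℝ) (Δ ε δ σ : ℝ)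
    (hΔ : 0 < Δ) (hε : ε ∈ Set.Ioo (0 : ℝ) 1) (hδ : δ ∈ Set.Ioo (0 : ℝ) 1)
    (hσ : σ ≥ Δ * Real.sqrt (2 * Real.log (1.25 / δ)) / ε)
    (hsens : ∀ d d', neighbor d d' → |f d - f d'| ≤ Δ) :
    DP neighbor (fun d => gaussianReal (f d) ((σ ^ 2).toNNReal)) ε δ := by
  obtain ⟨hε0, hε1⟩ := hε
  obtain ⟨hδ0, hδ1⟩ := hδ
  set a : ℝ := Real.sqrt (2 * Real.log (1.25/δ)) with ha
  have hquot : (1:ℝ) < 1.25/δ := by rw [lt_div_iff₀ hδ0]; linarith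
  have hLpos : (0:ℝ) < Real.log (1.25/δ) := Real.log_pos hquot
  have hapos : 0 < a := Real.sqrt_pos.2 (by linarith)
  have ha2 : a^2 = 2 * Real.log (1.25/δ) := Real.sq_sqrt (by linarith)
  have hσpos : 0 < σ := lt_of_lt_of_le (by positivity) hσ
  have hv : (σ^2).toNNReal ≠ 0 := by
    rw [Ne, Real.toNNReal_eq_zero]; push_neg; positivity
  have hvr : ((σ^2).toNNReal : ℝ) = σ^2 := Real.coe_toNNReal _ (sq_nonneg σ)
  intro d d' hn s hs
  simp only
  by_cases hc : f d - f d' = 0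
  · have hdd : f d = f d' := by linarith [sub_eq_zero.1 hc]
    rw [hdd]
    refine le_trans ?_ le_self_add
    exact le_mul_of_one_le_left zero_le
      (ENNReal.one_le_ofReal.2 (Real.one_le_exp hε0.le))
  · set c : ℝ := f d - f d' with hcdef
    set t : ℝ := ε * σ^2 - c^2/2 with htdef
    set B : Set ℝ := {x | t < c * (x - f d)} with hBdef
    have hcval : c = f d - f d' := hcdef
    have htval : t = ε * σ^2 - c^2/2 := htdef
    have hBval : B = {x | t < c * (x - f d)} := hBdef
    clear_value B t c
    have hcpos : 0 < |c| := abs_pos.2 hc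
    have hcΔ : |c| ≤ Δ := hcval ▸ hsens d d' hn
    have hεσ : Δ * a ≤ ε * σ := by
      rw [ge_iff_le, div_le_iff₀ hε0] at hσ
      linarith
    have hca : |c| * a ≤ σ := by
      calc |c| * a ≤ Δ * a := mul_le_mul_of_nonneg_right hcΔ hapos.le
        _ ≤ ε * σ := hεσ
        _ ≤ σ := by nlinarith
    -- decomposition
    have hdecomp : gaussianReal (f d) ((σ^2).toNNReal) s
        ≤ gaussianReal (f d) ((σ^2).toNNReal) (s ∩ Bᶜ)
          + gaussianReal (f d) ((σ^2).toNNReal) B := by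
      refine le_trans (measure_mono ?_) (measure_union_le _ _)
      intro x hx
      by_cases hxB : x ∈ B
      · exact Or.inr hxB
      · exact Or.inl ⟨hx, hxB⟩
    -- ratio bound on Bᶜ
    have hratio : gaussianReal (f d) ((σ^2).toNNReal) (s ∩ Bᶜ)
        ≤ ENNReal.ofReal (Real.exp ε) * gaussianReal (f d') ((σ^2).toNNReal) (s ∩ Bᶜ) := by
      rw [gaussianReal_apply _ hv, gaussianReal_apply _ hv,
        ← lintegral_const_mul _ (measurable_gaussianPDF _ _)]
      refine setLIntegral_mono ((measurable_gaussianPDF _ _).const_mul _) (fun x hx => ?_)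
      have hxB : x ∉ B := hx.2
      rw [hBval, Set.mem_setOf_eq, not_lt] at hxB
      have hxle : c * (x - f d) ≤ t := hxB
      simp only [gaussianPDF, ← ENNReal.ofReal_mul (Real.exp_nonneg ε)]
      apply ENNReal.ofReal_le_ofReal
      simp only [gaussianPDFReal]
      have hE : Real.exp (-(x - f d)^2/(2*((σ^2).toNNReal : ℝ)))
          ≤ Real.exp ε * Real.exp (-(x - f d')^2/(2*((σ^2).toNNReal : ℝ))) := by
        rw [← Real.exp_add]
        apply Real.exp_le_exp.2
        have hexpand : (x - f d')^2 = (x - f d)^2 + 2*c*(x - f d) + c^2 := by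
          rw [show x - f d' = (x - f d) + c by rw [hcval]; ring]; ring
        have hkey : ε + -(x - f d')^2 / (2*((σ^2).toNNReal : ℝ))
              - (-(x - f d)^2 / (2*((σ^2).toNNReal : ℝ)))
            = (2*ε*σ^2 + (x - f d)^2 - (x - f d')^2) / (2*σ^2) := by
          rw [hvr]; field_simp; ring
        have hnum : 0 ≤ 2*ε*σ^2 + (x - f d)^2 - (x - f d')^2 := by
          rw [htval] at hxle
          nlinarith [hxle, hexpand]
        have : 0 ≤ ε + -(x - f d')^2 / (2*((σ^2).toNNReal : ℝ))
            - (-(x - f d)^2 / (2*((σ^2).toNNReal : ℝ))) := by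
          rw [hkey]
          positivity
        linarith
      nlinarith [mul_le_mul_of_nonneg_left hE
        (inv_nonneg.2 (Real.sqrt_nonneg (2*Real.pi*((σ^2).toNNReal : ℝ))))]
    -- tail bound
    have htail : gaussianReal (f d) ((σ^2).toNNReal) B ≤ ENNReal.ofReal δ := by
      rw [hBval, gauss_linear_tail (f d) _ hv hc t]
      apply tail_le_delta ⟨hδ0, hδ1⟩
      have hsv : Real.sqrt ((σ^2).toNNReal : ℝ) = σ := by
        rw [hvr, Real.sqrt_sq hσpos.le]
      rw [hsv]
      have heq : t / (|c| * σ) = ε*σ/|c| - |c|/(2*σ) := by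
        rw [htval, ← sq_abs c]
        field_simp
      rw [heq, ← ha]
      have h1 : a ≤ ε*σ/|c| := by
        rw [le_div_iff₀ hcpos]
        calc a * |c| ≤ a * Δ := mul_le_mul_of_nonneg_left hcΔ hapos.le
          _ = Δ * a := mul_comm _ _
          _ ≤ ε * σ := hεσ
      have h2 : |c|/(2*σ) ≤ (2*a)⁻¹ := by
        rw [div_le_iff₀ (by positivity), inv_mul_eq_div, le_div_iff₀ (by positivity)]
        nlinarith
      linarith
    calc gaussianReal (f d) ((σ^2).toNNReal) s
        ≤ gaussianReal (f d) ((σ^2).toNNReal) (s ∩ Bᶜ)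
          + gaussianReal (f d) ((σ^2).toNNReal) B := hdecomp
      _ ≤ ENNReal.ofReal (Real.exp ε) * gaussianReal (f d') ((σ^2).toNNReal) s
          + ENNReal.ofReal δ := by
        refine add_le_add (le_trans hratio ?_) htail
        exact mul_le_mul_right (measure_mono Set.inter_subset_left) _
end

section
/- Subsampling amplification (simple form): if A is (ε, 0)-DP and B is the mechanism that, given dataset D, includes each record independently with probability q ∈ (0,1] and runs A on the subsample, then B is (log(1 + q(e^ε − 1)), 0)-DP; in particular log(1 + q(e^ε − 1)) ≤ qε·e^ε and, for ε ≤ 1, log(1 + q(e^ε − 1)) ≤ 2qε. -/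
open MeasureTheory

/-- Datasets (finite sets of records) are neighboring if one is obtained from
the other by adding or removing a single record. -/
def addRemoveNeighbor {X : Type*} [DecidableEq X] (d d' : Finset X) : Prop :=
  (∃ x ∉ d', d = insert x d') ∨ (∃ x ∉ d, d' = insert x d)

/-- Poisson subsampling with rate `q`: each record of the dataset is included
independently with probability `q`; the distribution over subsamples `s ⊆ d`
assigns probability `q^|s| (1-q)^{|d|-|s|}`. -/
noncomputable def poissonSubsample {X : Type*} [DecidableEq X] [MeasurableSpace (Finset X)]
    (q : ℝ) (d : Finset X) : Measure (Finset X) :=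
  ∑ s ∈ d.powerset,
    (ENNReal.ofReal (q ^ s.card * (1 - q) ^ (d.card - s.card))) • Measure.dirac s


private lemma bind_poisson_apply {X Ω : Type*} [DecidableEq X] [MeasurableSpace (Finset X)]
    [MeasurableSpace Ω] (A : Finset X → Measure Ω) (q : ℝ) (hmeas : Measurable A)
    (d : Finset X) {s : Set Ω} (hs : MeasurableSet s) :
    ((poissonSubsample q d).bind A) s =
      ∑ t ∈ d.powerset, ENNReal.ofReal (q ^ t.card * (1 - q) ^ (d.card - t.card)) * A t s := by
  rw [poissonSubsample, Measure.bind_apply hs hmeas.aemeasurable, lintegral_finset_sum_measure]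
  refine Finset.sum_congr rfl fun t ht => ?_
  rw [lintegral_smul_measure,
    lintegral_dirac' t (show Measurable fun u => A u s from (Measure.measurable_coe hs).comp hmeas), smul_eq_mul]

private lemma aux_collect (c1 c2 c3 : ℝ) (h1 : 0 ≤ c1) (h2 : 0 ≤ c2) (h3 : 0 ≤ c3) (a : ENNReal) :
    ENNReal.ofReal c1 * a + ENNReal.ofReal c2 * (ENNReal.ofReal c3 * a)
      = ENNReal.ofReal (c1 + c2 * c3) * a := by
  rw [← mul_assoc, ← ENNReal.ofReal_mul h2, ← add_mul,
    ← ENNReal.ofReal_add h1 (mul_nonneg h2 h3)]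

/-- Privacy amplification by subsampling: if `A` is `(ε, 0)`-DP (w.r.t.
add/remove-one neighboring) then running `A` on a Poisson subsample with rate
`q` is `(log(1 + q(e^ε - 1)), 0)`-DP; moreover
`log(1 + q(e^ε - 1)) ≤ q ε e^ε` and, if `ε ≤ 1`,
`log(1 + q(e^ε - 1)) ≤ 2 q ε`. -/
theorem dp_subsampling_amplification {X Ω : Type*} [DecidableEq X]
    [MeasurableSpace (Finset X)] [MeasurableSpace Ω]
    (A : Finset X → Measure Ω) (ε q : ℝ)
    (hε : 0 ≤ ε) (hq : q ∈ Set.Ioc (0 : ℝ) 1)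
    (hmeas : Measurable A)
    (hprob : ∀ d, IsProbabilityMeasure (A d))
    (hA : DP addRemoveNeighbor A ε 0) :
    DP addRemoveNeighbor (fun d => (poissonSubsample q d).bind A)
        (Real.log (1 + q * (Real.exp ε - 1))) 0 ∧
      Real.log (1 + q * (Real.exp ε - 1)) ≤ q * ε * Real.exp ε ∧
      (ε ≤ 1 → Real.log (1 + q * (Real.exp ε - 1)) ≤ 2 * q * ε) := by
  obtain ⟨hq0, hq1⟩ := hq
  have h1q : (0:ℝ) ≤ 1 - q := by linarith
  have ha1 : 1 ≤ Real.exp ε := Real.one_le_exp hε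
  have hKpos : (0:ℝ) < 1 + q * (Real.exp ε - 1) := by nlinarith
  have hab : Real.exp ε * Real.exp (-ε) = 1 := by
    rw [← Real.exp_add]; simp
  refine ⟨?_, ?_, ?_⟩
  · intro d d' hnb s hs
    simp only [ENNReal.ofReal_zero, add_zero]
    rw [Real.exp_log hKpos, bind_poisson_apply A q hmeas d hs, bind_poisson_apply A q hmeas d' hs]
    rcases hnb with ⟨x, hx, rfl⟩ | ⟨x, hx, rfl⟩
    · -- d = insert x d'
      rw [Finset.sum_powerset_insert hx, ← Finset.sum_add_distrib, Finset.mul_sum]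
      refine Finset.sum_le_sum fun t ht => ?_
      have htd : t ⊆ d' := Finset.mem_powerset.mp ht
      have hxt : x ∉ t := fun h => hx (htd h)
      have hct : t.card ≤ d'.card := Finset.card_le_card htd
      rw [Finset.card_insert_of_notMem hx, Finset.card_insert_of_notMem hxt]
      set a := A t s with ha
      set b := A (insert x t) s with hb
      set w : ℝ := q ^ t.card * (1 - q) ^ (d'.card - t.card) with hw
      have hwn : 0 ≤ w := mul_nonneg (pow_nonneg hq0.le _) (pow_nonneg h1q _)
      have n1 : 0 ≤ (1 - q) * w := mul_nonneg h1q hwn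
      have n2 : 0 ≤ q * w := mul_nonneg hq0.le hwn
      have hc1 : d'.card + 1 - t.card = (d'.card - t.card) + 1 := by omega
      have hc2 : d'.card + 1 - (t.card + 1) = d'.card - t.card := by omega
      rw [hc1, hc2]
      have e1 : ENNReal.ofReal (q ^ t.card * (1 - q) ^ (d'.card - t.card + 1))
          = ENNReal.ofReal ((1 - q) * w) := by rw [hw, pow_succ]; congr 1; ring
      have e2 : ENNReal.ofReal (q ^ (t.card + 1) * (1 - q) ^ (d'.card - t.card))
          = ENNReal.ofReal (q * w) := by rw [hw, pow_succ]; congr 1; ring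
      rw [e1, e2]
      have hDP1 : b ≤ ENNReal.ofReal (Real.exp ε) * a := by
        have := hA (insert x t) t (Or.inl ⟨x, hxt, rfl⟩) s hs
        simpa using this
      have ekey : (1 - q) * w + q * w * Real.exp ε = (1 + q * (Real.exp ε - 1)) * w := by ring
      calc ENNReal.ofReal ((1 - q) * w) * a + ENNReal.ofReal (q * w) * b
          ≤ ENNReal.ofReal ((1 - q) * w) * a
            + ENNReal.ofReal (q * w) * (ENNReal.ofReal (Real.exp ε) * a) := by gcongr
        _ = ENNReal.ofReal ((1 - q) * w + q * w * Real.exp ε) * a :=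
            aux_collect _ _ _ n1 n2 (Real.exp_pos _).le a
        _ = ENNReal.ofReal (1 + q * (Real.exp ε - 1)) * (ENNReal.ofReal w * a) := by
            rw [ekey, ENNReal.ofReal_mul hKpos.le, mul_assoc]
    · -- d' = insert x d
      rw [Finset.sum_powerset_insert hx, ← Finset.sum_add_distrib, Finset.mul_sum]
      refine Finset.sum_le_sum fun t ht => ?_
      have htd : t ⊆ d := Finset.mem_powerset.mp ht
      have hxt : x ∉ t := fun h => hx (htd h)
      have hct : t.card ≤ d.card := Finset.card_le_card htd
      rw [Finset.card_insert_of_notMem hx, Finset.card_insert_of_notMem hxt]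
      set a := A t s with ha
      set b := A (insert x t) s with hb
      set w : ℝ := q ^ t.card * (1 - q) ^ (d.card - t.card) with hw
      have hwn : 0 ≤ w := mul_nonneg (pow_nonneg hq0.le _) (pow_nonneg h1q _)
      have n1 : 0 ≤ (1 - q) * w := mul_nonneg h1q hwn
      have n2 : 0 ≤ q * w := mul_nonneg hq0.le hwn
      have hc1 : d.card + 1 - t.card = (d.card - t.card) + 1 := by omega
      have hc2 : d.card + 1 - (t.card + 1) = d.card - t.card := by omega
      rw [hc1, hc2]
      have e1 : ENNReal.ofReal (q ^ t.card * (1 - q) ^ (d.card - t.card + 1))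
          = ENNReal.ofReal ((1 - q) * w) := by rw [hw, pow_succ]; congr 1; ring
      have e2 : ENNReal.ofReal (q ^ (t.card + 1) * (1 - q) ^ (d.card - t.card))
          = ENNReal.ofReal (q * w) := by rw [hw, pow_succ]; congr 1; ring
      rw [e1, e2]
      have hDP2 : a ≤ ENNReal.ofReal (Real.exp ε) * b := by
        have := hA t (insert x t) (Or.inr ⟨x, hxt, rfl⟩) s hs
        simpa using this
      have step : ENNReal.ofReal (Real.exp (-ε)) * a ≤ b := by
        calc ENNReal.ofReal (Real.exp (-ε)) * a
            ≤ ENNReal.ofReal (Real.exp (-ε)) * (ENNReal.ofReal (Real.exp ε) * b) := by gcongr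
          _ = ENNReal.ofReal (Real.exp (-ε) * Real.exp ε) * b := by
              rw [← mul_assoc, ← ENNReal.ofReal_mul (Real.exp_pos _).le]
          _ = b := by rw [mul_comm (Real.exp (-ε)), hab]; simp
      have hba : Real.exp (-ε) * Real.exp ε ^ 2 = Real.exp ε := by
        linear_combination Real.exp ε * hab
      have hsum : 2 ≤ Real.exp ε + Real.exp (-ε) := by
        nlinarith [mul_nonneg (Real.exp_pos (-ε)).le (sq_nonneg (Real.exp ε - 1)), hba, hab]
      have hexp : (1 + q * (Real.exp ε - 1)) * ((1 - q) + q * Real.exp (-ε))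
          = 1 + q * (1 - q) * (Real.exp ε + Real.exp (-ε) - 2)
            + q * q * (Real.exp ε * Real.exp (-ε) - 1) := by ring
      have hcore : (1:ℝ) ≤ (1 + q * (Real.exp ε - 1)) * ((1 - q) + q * Real.exp (-ε)) := by
        rw [hexp, hab]
        nlinarith [mul_nonneg (mul_nonneg hq0.le h1q) (by linarith :
          (0:ℝ) ≤ Real.exp ε + Real.exp (-ε) - 2)]
      have hreal : w ≤ (1 + q * (Real.exp ε - 1)) * ((1 - q) * w + q * w * Real.exp (-ε)) := by
        nlinarith [mul_le_mul_of_nonneg_left hcore hwn]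
      calc ENNReal.ofReal w * a
          ≤ ENNReal.ofReal ((1 + q * (Real.exp ε - 1)) * ((1 - q) * w + q * w * Real.exp (-ε)))
              * a := mul_le_mul_left (ENNReal.ofReal_le_ofReal hreal) a
        _ = ENNReal.ofReal (1 + q * (Real.exp ε - 1)) *
            (ENNReal.ofReal ((1 - q) * w) * a
              + ENNReal.ofReal (q * w) * (ENNReal.ofReal (Real.exp (-ε)) * a)) := by
            rw [aux_collect _ _ _ n1 n2 (Real.exp_pos _).le a, ENNReal.ofReal_mul hKpos.le,
              mul_assoc (ENNReal.ofReal (1 + q * (Real.exp ε - 1)))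
                (ENNReal.ofReal ((1 - q) * w + q * w * Real.exp (-ε))) a]
        _ ≤ ENNReal.ofReal (1 + q * (Real.exp ε - 1)) *
            (ENNReal.ofReal ((1 - q) * w) * a + ENNReal.ofReal (q * w) * b) := by gcongr
  · have h1 : Real.log (1 + q * (Real.exp ε - 1)) ≤ q * (Real.exp ε - 1) := by
      have := Real.log_le_sub_one_of_pos hKpos; linarith
    have h2 : Real.exp ε - 1 ≤ ε * Real.exp ε := by
      nlinarith [mul_le_mul_of_nonneg_left (Real.add_one_le_exp (-ε)) (Real.exp_pos ε).le]
    nlinarith [mul_le_mul_of_nonneg_left h2 hq0.le]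
  · intro hε1
    have h1 : Real.log (1 + q * (Real.exp ε - 1)) ≤ q * (Real.exp ε - 1) := by
      have := Real.log_le_sub_one_of_pos hKpos; linarith
    have habs : |ε| ≤ 1 := by rw [abs_of_nonneg hε]; exact hε1
    have h2 := Real.exp_bound habs (n := 2) (by norm_num)
    have h3 : Real.exp ε - 1 ≤ 2 * ε := by
      rw [abs_of_nonneg hε] at h2
      simp [Finset.sum_range_succ, Nat.factorial] at h2
      rw [abs_le] at h2
      nlinarith [h2.2, sq_nonneg ε]
    nlinarith [mul_le_mul_of_nonneg_left h3 hq0.le]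
end
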